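/- Let X, Y be closed subsets of Euclidean spaces containing 0 and let h : X → Y be a homeomorphism with h(0) = 0 satisfying (1/c)‖p - q‖^{1/α} ≤ ‖h(p) - h(q)‖ ≤ c‖p - q‖^α for all p, q ∈ X, where c > 0 and 0 < α ≤ 1. Let Γ₁, Γ₂ ⊆ X be closed with Γ₁ ∩ Γ₂ = {0}, and assume the contacts Cont(Γ₁, Γ₂) and Cont(h(Γ₁), h(Γ₂)) (defined as limits of log f(r)/log r as r → 0⁺, where f is the separation function) exist and are finite. Then α² · Cont(h(Γ₁), h(Γ₂)) ≤ Cont(Γ₁, Γ₂) ≤ (1/α²) · Cont(h(Γ₁), h(Γ₂)). -/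

import Mathlib

open Set Filter

/-- The separation function `f_{Γ₁,Γ₂}(r)`. -/
noncomputable def sep {E : Type*} [NormedAddCommGroup E] (Γ₁ Γ₂ : Set E) (r : ℝ) : ℝ :=
  sInf {d : ℝ | ∃ γ₁ ∈ Γ₁, ∃ γ₂ ∈ Γ₂, r ≤ ‖γ₁‖ ∧ r ≤ ‖γ₂‖ ∧ d = ‖γ₁ - γ₂‖}

/-- `Cont(Γ₁,Γ₂) = L`. -/
def hasCont {E : Type*} [NormedAddCommGroup E] (Γ₁ Γ₂ : Set E) (L : ℝ) : Prop :=
  Tendsto (fun r : ℝ => Real.log (sep Γ₁ Γ₂ r) / Real.log r) (nhdsWithin 0 (Ioi 0)) (nhds L)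

namespace ContAux

variable {E : Type*} [NormedAddCommGroup E]

def Dset (Γ₁ Γ₂ : Set E) (r : ℝ) : Set ℝ :=
  {d : ℝ | ∃ γ₁ ∈ Γ₁, ∃ γ₂ ∈ Γ₂, r ≤ ‖γ₁‖ ∧ r ≤ ‖γ₂‖ ∧ d = ‖γ₁ - γ₂‖}

lemma sep_eq (Γ₁ Γ₂ : Set E) (r : ℝ) : sep Γ₁ Γ₂ r = sInf (Dset Γ₁ Γ₂ r) := rfl

lemma Dset_nonneg {Γ₁ Γ₂ : Set E} {r : ℝ} : ∀ d ∈ Dset Γ₁ Γ₂ r, (0:ℝ) ≤ d := by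
  rintro d ⟨γ₁, _, γ₂, _, _, _, rfl⟩; exact norm_nonneg _

lemma Dset_bddBelow {Γ₁ Γ₂ : Set E} {r : ℝ} : BddBelow (Dset Γ₁ Γ₂ r) :=
  ⟨0, fun d hd => Dset_nonneg d hd⟩

lemma sep_nonneg (Γ₁ Γ₂ : Set E) (r : ℝ) : 0 ≤ sep Γ₁ Γ₂ r :=
  Real.sInf_nonneg Dset_nonneg

lemma Dset_anti {Γ₁ Γ₂ : Set E} {r r' : ℝ} (h : r ≤ r') :
    Dset Γ₁ Γ₂ r' ⊆ Dset Γ₁ Γ₂ r := by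
  rintro d ⟨γ₁, h₁, γ₂, h₂, hr₁, hr₂, rfl⟩
  exact ⟨γ₁, h₁, γ₂, h₂, h.trans hr₁, h.trans hr₂, rfl⟩

lemma sep_le {Γ₁ Γ₂ : Set E} {r d : ℝ} (hd : d ∈ Dset Γ₁ Γ₂ r) : sep Γ₁ Γ₂ r ≤ d :=
  csInf_le Dset_bddBelow hd

/-- If the separation vanishes (with a nonempty witness set) below some positive radius,
then the contact must be zero. -/
lemma hasCont_zero_of_sep_zero {Γ₁ Γ₂ : Set E} {K s₀ : ℝ} (hs₀ : 0 < s₀)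
    (hz : ∀ s, 0 < s → s < s₀ → sep Γ₁ Γ₂ s = 0) (hK : hasCont Γ₁ Γ₂ K) : K = 0 := by
  have hmem : Ioo (0:ℝ) s₀ ∈ nhdsWithin (0:ℝ) (Ioi 0) :=
    Ioo_mem_nhdsGT_of_mem ⟨le_refl 0, hs₀⟩
  have h0 : Tendsto (fun r : ℝ => Real.log (sep Γ₁ Γ₂ r) / Real.log r)
      (nhdsWithin 0 (Ioi 0)) (nhds 0) := by
    refine Tendsto.congr' ?_ tendsto_const_nhds
    filter_upwards [hmem] with s hs
    rw [hz s hs.1 hs.2, Real.log_zero, zero_div]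
  exact tendsto_nhds_unique hK h0

section Key

variable {F : Type*} [NormedAddCommGroup F]

/-- Transfer of separation witnesses through a bi-Hölder map. -/
lemma transfer {X : Set E} {h : E → F} (h0X : (0:E) ∈ X) (h0 : h 0 = 0)
    {c α : ℝ} (hc : 0 < c) (hα : 0 < α)
    (hHolder : ∀ p ∈ X, ∀ q ∈ X,
      (1 / c) * ‖p - q‖ ^ (1 / α) ≤ ‖h p - h q‖ ∧ ‖h p - h q‖ ≤ c * ‖p - q‖ ^ α)
    {Γ₁ Γ₂ : Set E} (hΓ₁X : Γ₁ ⊆ X) (hΓ₂X : Γ₂ ⊆ X)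
    {γ₁ γ₂ : E} {r : ℝ} (hγ₁ : γ₁ ∈ Γ₁) (hγ₂ : γ₂ ∈ Γ₂) (hr : 0 ≤ r)
    (h1 : r ≤ ‖γ₁‖) (h2 : r ≤ ‖γ₂‖) :
    ‖h γ₁ - h γ₂‖ ∈ Dset (h '' Γ₁) (h '' Γ₂) ((1/c) * r ^ (1/α)) ∧
      ‖h γ₁ - h γ₂‖ ≤ c * ‖γ₁ - γ₂‖ ^ α := by
  have hα' : (0:ℝ) < 1/α := by positivity
  have hnorm : ∀ γ ∈ X, r ≤ ‖γ‖ → (1/c) * r ^ (1/α) ≤ ‖h γ‖ := by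
    intro γ hγX hγr
    have := (hHolder γ hγX 0 h0X).1
    rw [h0, sub_zero, sub_zero] at this
    refine le_trans ?_ this
    have : r ^ (1/α) ≤ ‖γ‖ ^ (1/α) := Real.rpow_le_rpow hr hγr hα'.le
    have hc' : (0:ℝ) ≤ 1/c := by positivity
    nlinarith [Real.rpow_nonneg hr (1/α)]
  exact ⟨⟨h γ₁, ⟨γ₁, hγ₁, rfl⟩, h γ₂, ⟨γ₂, hγ₂, rfl⟩,
      hnorm γ₁ (hΓ₁X hγ₁) h1, hnorm γ₂ (hΓ₂X hγ₂) h2, rfl⟩,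
    (hHolder γ₁ (hΓ₁X hγ₁) γ₂ (hΓ₂X hγ₂)).2⟩


set_option maxHeartbeats 1000000 in
/-- One-sided estimate: `α² K₁ ≤ K₂`. -/
lemma key {X : Set E} {h : E → F} (h0X : (0:E) ∈ X) (h0 : h 0 = 0)
    {c α : ℝ} (hc : 0 < c) (hα : 0 < α)
    (hHolder : ∀ p ∈ X, ∀ q ∈ X,
      (1 / c) * ‖p - q‖ ^ (1 / α) ≤ ‖h p - h q‖ ∧ ‖h p - h q‖ ≤ c * ‖p - q‖ ^ α)
    {Γ₁ Γ₂ : Set E} (hΓ₁X : Γ₁ ⊆ X) (hΓ₂X : Γ₂ ⊆ X)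
    {K₁ K₂ : ℝ} (hK₁ : hasCont Γ₁ Γ₂ K₁) (hK₂ : hasCont (h '' Γ₁) (h '' Γ₂) K₂) :
    α ^ 2 * K₁ ≤ K₂ := by
  have hα' : (0:ℝ) < 1/α := by positivity
  by_cases hz : ∃ r₀, 0 < r₀ ∧ (Dset Γ₁ Γ₂ r₀).Nonempty ∧ sep Γ₁ Γ₂ r₀ ≤ 0
  · -- degenerate case: the separation vanishes, both contacts are zero
    obtain ⟨r₀, hr₀, hne, hsep0⟩ := hz
    have hsep0' : sep Γ₁ Γ₂ r₀ = 0 := le_antisymm hsep0 (sep_nonneg _ _ _)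
    have hK1z : K₁ = 0 := by
      refine hasCont_zero_of_sep_zero hr₀ (fun s hs hs' => ?_) hK₁
      refine le_antisymm ?_ (sep_nonneg _ _ _)
      rw [← hsep0', sep_eq, sep_eq]
      exact csInf_le_csInf Dset_bddBelow hne (Dset_anti hs'.le)
    have hs₀ : 0 < (1/c) * r₀ ^ (1/α) := by positivity
    have hK2z : K₂ = 0 := by
      refine hasCont_zero_of_sep_zero hs₀ (fun s hs hs' => ?_) hK₂
      refine le_antisymm (le_of_forall_pos_le_add fun δ hδ => ?_) (sep_nonneg _ _ _)
      have hδc : (0:ℝ) < (δ/c) ^ (1/α) := by positivity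
      have : sInf (Dset Γ₁ Γ₂ r₀) < (δ/c) ^ (1/α) := by rw [← sep_eq, hsep0']; exact hδc
      obtain ⟨d, hd, hdlt⟩ := exists_lt_of_csInf_lt hne this
      obtain ⟨γ₁, hγ₁, γ₂, hγ₂, hd1, hd2, rfl⟩ := hd
      obtain ⟨hmem, hbd⟩ := transfer h0X h0 hc hα hHolder hΓ₁X hΓ₂X hγ₁ hγ₂ hr₀.le hd1 hd2
      have hmem' : ‖h γ₁ - h γ₂‖ ∈ Dset (h '' Γ₁) (h '' Γ₂) s := Dset_anti hs'.le hmem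
      have h1 : ‖γ₁ - γ₂‖ ^ α ≤ ((δ/c) ^ (1/α)) ^ α :=
        Real.rpow_le_rpow (norm_nonneg _) hdlt.le hα.le
      have h2 : ((δ/c) ^ (1/α)) ^ α = δ/c := by
        rw [← Real.rpow_mul (by positivity), one_div_mul_cancel hα.ne', Real.rpow_one]
      calc sep (h '' Γ₁) (h '' Γ₂) s ≤ ‖h γ₁ - h γ₂‖ := sep_le hmem'
        _ ≤ c * ‖γ₁ - γ₂‖ ^ α := hbd
        _ ≤ c * (δ/c) := by rw [← h2]; nlinarith
        _ = δ := by field_simp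
        _ ≤ 0 + δ := by linarith
    rw [hK1z, hK2z]; simp
  push_neg at hz
  by_cases htriv : (∀ x ∈ Γ₁, x = (0:E)) ∨ (∀ x ∈ Γ₂, x = (0:E))
  · -- one of the germs is trivial: both contacts are zero
    have hK1z : K₁ = 0 := by
      refine hasCont_zero_of_sep_zero one_pos (fun s hs _ => ?_) hK₁
      have : Dset Γ₁ Γ₂ s = ∅ := by
        ext d; simp only [Dset, mem_setOf_eq, mem_empty_iff_false, iff_false]
        rintro ⟨γ₁, hγ₁, γ₂, hγ₂, hd1, hd2, rfl⟩
        rcases htriv with ht | ht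
        · rw [ht γ₁ hγ₁, norm_zero] at hd1; linarith
        · rw [ht γ₂ hγ₂, norm_zero] at hd2; linarith
      rw [sep_eq, this, Real.sInf_empty]
    have hK2z : K₂ = 0 := by
      refine hasCont_zero_of_sep_zero one_pos (fun s hs _ => ?_) hK₂
      have : Dset (h '' Γ₁) (h '' Γ₂) s = ∅ := by
        ext d; simp only [Dset, mem_setOf_eq, mem_empty_iff_false, iff_false]
        rintro ⟨y₁, ⟨γ₁, hγ₁, rfl⟩, y₂, ⟨γ₂, hγ₂, rfl⟩, hd1, hd2, rfl⟩
        rcases htriv with ht | ht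
        · rw [ht γ₁ hγ₁, h0, norm_zero] at hd1; linarith
        · rw [ht γ₂ hγ₂, h0, norm_zero] at hd2; linarith
      rw [sep_eq, this, Real.sInf_empty]
    rw [hK1z, hK2z]; simp
  -- main case
  push_neg at htriv
  obtain ⟨⟨x₁, hx₁, hx₁0⟩, ⟨x₂, hx₂, hx₂0⟩⟩ := htriv
  set r₁ : ℝ := min ‖x₁‖ ‖x₂‖ with hr₁def
  have hr₁ : 0 < r₁ := lt_min (norm_pos_iff.mpr hx₁0) (norm_pos_iff.mpr hx₂0)
  set s₁ : ℝ := (1/c) * r₁ ^ (1/α) with hs₁def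
  have hs₁ : 0 < s₁ := by positivity
  set B : ℝ := min s₁ (min 1 (1/c)) with hBdef
  have hB : 0 < B := lt_min hs₁ (lt_min one_pos (by positivity))
  -- the pointwise inequality
  have hpt : ∀ s : ℝ, s ∈ Ioo (0:ℝ) B →
      (Real.log c + α * Real.log (sep Γ₁ Γ₂ ((c*s) ^ α))) / Real.log s ≤
        Real.log (sep (h '' Γ₁) (h '' Γ₂) s) / Real.log s := by
    intro s ⟨hs, hsB⟩
    have hs1 : s < 1 := hsB.trans_le ((min_le_right _ _).trans (min_le_left _ _))
    have hsc : c * s < 1 := by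
      have : s < 1/c := hsB.trans_le ((min_le_right _ _).trans (min_le_right _ _))
      calc c * s < c * (1/c) := by nlinarith
        _ = 1 := by field_simp
    have hcs : 0 < c * s := by positivity
    set r : ℝ := (c*s) ^ α with hrdef
    have hrpos : 0 < r := Real.rpow_pos_of_pos hcs α
    have hrr₁ : r ≤ r₁ := by
      have h1 : c * s ≤ r₁ ^ (1/α) := by
        have : s ≤ s₁ := (hsB.trans_le (min_le_left _ _)).le
        rw [hs₁def] at this
        calc c * s ≤ c * ((1/c) * r₁ ^ (1/α)) := by nlinarith
          _ = r₁ ^ (1/α) := by field_simp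
      calc r ≤ (r₁ ^ (1/α)) ^ α := Real.rpow_le_rpow hcs.le h1 hα.le
        _ = r₁ := by
          rw [← Real.rpow_mul hr₁.le, one_div_mul_cancel hα.ne', Real.rpow_one]
    have hsr : (1/c) * r ^ (1/α) = s := by
      rw [hrdef, ← Real.rpow_mul hcs.le, mul_one_div_cancel hα.ne', Real.rpow_one]
      field_simp
    have hd0 : ‖x₁ - x₂‖ ∈ Dset Γ₁ Γ₂ r :=
      ⟨x₁, hx₁, x₂, hx₂, hrr₁.trans (min_le_left _ _), hrr₁.trans (min_le_right _ _), rfl⟩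
    have hne : (Dset Γ₁ Γ₂ r).Nonempty := ⟨_, hd0⟩
    have hm : 0 < sep Γ₁ Γ₂ r := hz r hrpos hne
    set m : ℝ := sep Γ₁ Γ₂ r with hmdef
    -- upper estimate for image separation
    have hA : sep (h '' Γ₁) (h '' Γ₂) s ≤ c * m ^ α := by
      refine le_of_forall_pos_le_add fun δ hδ => ?_
      have hmt : (0:ℝ) < m ^ α + δ/c := by positivity
      set t : ℝ := (m ^ α + δ/c) ^ (1/α) with htdef
      have hmlt : m < t := by
        have h1 : m = (m ^ α) ^ (1/α) := by
          rw [← Real.rpow_mul hm.le, mul_one_div_cancel hα.ne', Real.rpow_one]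
        have h2 : m ^ α < m ^ α + δ/c := by
          have : (0:ℝ) < δ/c := by positivity
          linarith
        calc m = (m ^ α) ^ (1/α) := h1
          _ < t := Real.rpow_lt_rpow (by positivity) h2 hα'
      obtain ⟨d, hd, hdlt⟩ := exists_lt_of_csInf_lt hne hmlt
      obtain ⟨γ₁, hγ₁, γ₂, hγ₂, hd1, hd2, rfl⟩ := hd
      obtain ⟨hmem, hbd⟩ := transfer h0X h0 hc hα hHolder hΓ₁X hΓ₂X hγ₁ hγ₂ hrpos.le hd1 hd2
      rw [hsr] at hmem
      have h1 : ‖γ₁ - γ₂‖ ^ α ≤ t ^ α := Real.rpow_le_rpow (norm_nonneg _) hdlt.le hα.le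
      have h2 : t ^ α = m ^ α + δ/c := by
        rw [htdef, ← Real.rpow_mul hmt.le, one_div_mul_cancel hα.ne', Real.rpow_one]
      calc sep (h '' Γ₁) (h '' Γ₂) s ≤ ‖h γ₁ - h γ₂‖ := sep_le hmem
        _ ≤ c * ‖γ₁ - γ₂‖ ^ α := hbd
        _ ≤ c * (m ^ α + δ/c) := by rw [← h2]; nlinarith
        _ = c * m ^ α + δ := by field_simp
    -- the image separation is positive
    have hne' : (Dset (h '' Γ₁) (h '' Γ₂) s).Nonempty := by
      obtain ⟨hmem, _⟩ := transfer h0X h0 hc hα hHolder hΓ₁X hΓ₂X hx₁ hx₂ hrpos.le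
        (hrr₁.trans (min_le_left _ _)) (hrr₁.trans (min_le_right _ _))
      rw [hsr] at hmem
      exact ⟨_, hmem⟩
    set t₀ : ℝ := (s/c) ^ (1/α) with ht₀def
    have ht₀ : 0 < t₀ := by positivity
    have hclaim : ∀ d' ∈ Dset (h '' Γ₁) (h '' Γ₂) s,
        (Dset Γ₁ Γ₂ t₀).Nonempty ∧ (1/c) * (sep Γ₁ Γ₂ t₀) ^ (1/α) ≤ d' := by
      rintro d' ⟨y₁, ⟨γ₁, hγ₁, rfl⟩, y₂, ⟨γ₂, hγ₂, rfl⟩, hd1, hd2, rfl⟩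
      have hnb : ∀ γ ∈ X, s ≤ ‖h γ‖ → t₀ ≤ ‖γ‖ := by
        intro γ hγX hγs
        have h1 : ‖h γ - h 0‖ ≤ c * ‖γ - 0‖ ^ α := (hHolder γ hγX 0 h0X).2
        rw [h0, sub_zero, sub_zero] at h1
        have h2 : s/c ≤ ‖γ‖ ^ α := by
          rw [div_le_iff₀ hc]; nlinarith
        calc t₀ ≤ (‖γ‖ ^ α) ^ (1/α) := Real.rpow_le_rpow (by positivity) h2 hα'.le
          _ = ‖γ‖ := by
            rw [← Real.rpow_mul (norm_nonneg _), mul_one_div_cancel hα.ne', Real.rpow_one]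
      have hn1 : t₀ ≤ ‖γ₁‖ := hnb γ₁ (hΓ₁X hγ₁) hd1
      have hn2 : t₀ ≤ ‖γ₂‖ := hnb γ₂ (hΓ₂X hγ₂) hd2
      have hmem0 : ‖γ₁ - γ₂‖ ∈ Dset Γ₁ Γ₂ t₀ := ⟨γ₁, hγ₁, γ₂, hγ₂, hn1, hn2, rfl⟩
      refine ⟨⟨_, hmem0⟩, ?_⟩
      have h3 : sep Γ₁ Γ₂ t₀ ≤ ‖γ₁ - γ₂‖ := sep_le hmem0
      have h4 : (sep Γ₁ Γ₂ t₀) ^ (1/α) ≤ ‖γ₁ - γ₂‖ ^ (1/α) :=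
        Real.rpow_le_rpow (sep_nonneg _ _ _) h3 hα'.le
      have h5 : (1/c) * ‖γ₁ - γ₂‖ ^ (1/α) ≤ ‖h γ₁ - h γ₂‖ :=
        (hHolder γ₁ (hΓ₁X hγ₁) γ₂ (hΓ₂X hγ₂)).1
      have hc' : (0:ℝ) ≤ 1/c := by positivity
      calc (1/c) * (sep Γ₁ Γ₂ t₀) ^ (1/α) ≤ (1/c) * ‖γ₁ - γ₂‖ ^ (1/α) :=
            mul_le_mul_of_nonneg_left h4 hc'
        _ ≤ ‖h γ₁ - h γ₂‖ := h5
    have hpos' : 0 < sep (h '' Γ₁) (h '' Γ₂) s := by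
      obtain ⟨d'₀, hd'₀⟩ := id hne'
      have hne₀ : (Dset Γ₁ Γ₂ t₀).Nonempty := (hclaim d'₀ hd'₀).1
      have hm₀ : 0 < sep Γ₁ Γ₂ t₀ := hz t₀ ht₀ hne₀
      have hβ : (0:ℝ) < (1/c) * (sep Γ₁ Γ₂ t₀) ^ (1/α) := by positivity
      exact hβ.trans_le (le_csInf hne' fun d' hd' => (hclaim d' hd').2)
    -- conclude the pointwise bound
    have hlogs : Real.log s < 0 := Real.log_neg hs hs1
    have hlog : Real.log (sep (h '' Γ₁) (h '' Γ₂) s) ≤ Real.log c + α * Real.log m := by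
      have := Real.log_le_log hpos' hA
      rwa [Real.log_mul hc.ne' (by positivity : (m:ℝ) ^ α ≠ 0), Real.log_rpow hm] at this
    exact div_le_div_of_nonpos_of_le hlogs.le hlog
  -- limit of the lower-bound function
  have hT1 : Tendsto (fun s : ℝ => (Real.log s)⁻¹) (nhdsWithin 0 (Ioi 0)) (nhds 0) := by
    have h1 : Tendsto (fun s : ℝ => -Real.log s) (nhdsWithin 0 (Ioi 0)) atTop :=
      tendsto_neg_atBot_atTop.comp Real.tendsto_log_nhdsGT_zero
    have h2 := h1.inv_tendsto_atTop
    have h3 : Tendsto (fun s : ℝ => -(-Real.log s)⁻¹) (nhdsWithin 0 (Ioi 0)) (nhds (-0)) :=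
      h2.neg
    rw [neg_zero] at h3
    refine h3.congr fun s => by rw [inv_neg, neg_neg]
  have hT2 : Tendsto (fun s : ℝ => (c*s) ^ α) (nhdsWithin 0 (Ioi 0))
      (nhdsWithin 0 (Ioi 0)) := by
    rw [tendsto_nhdsWithin_iff]
    constructor
    · have h1 : ContinuousAt (fun x : ℝ => x ^ α) 0 :=
        Real.continuousAt_rpow_const 0 α (Or.inr hα.le)
      have h2 : Tendsto (fun s : ℝ => c*s) (nhdsWithin 0 (Ioi 0)) (nhds 0) := by
        have := (continuous_const.mul continuous_id : Continuous fun s : ℝ => c*s).tendsto 0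
        simp only [Pi.mul_apply, mul_zero] at this
        exact this.mono_left nhdsWithin_le_nhds
      have h3 := (h1.tendsto.comp h2 : Tendsto (fun s : ℝ => (c*s) ^ α)
        (nhdsWithin 0 (Ioi 0)) (nhds ((0:ℝ) ^ α)))
      rwa [Real.zero_rpow hα.ne'] at h3
    · filter_upwards [self_mem_nhdsWithin] with s hs
      exact Real.rpow_pos_of_pos (mul_pos hc hs) α
  have hT3 : Tendsto (fun s : ℝ => Real.log (sep Γ₁ Γ₂ ((c*s) ^ α)) /
      Real.log ((c*s) ^ α)) (nhdsWithin 0 (Ioi 0)) (nhds K₁) := hK₁.comp hT2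
  have hTG' : Tendsto (fun s : ℝ => Real.log c * (Real.log s)⁻¹ +
      α * (Real.log (sep Γ₁ Γ₂ ((c*s) ^ α)) / Real.log ((c*s) ^ α)) *
        (α * Real.log c * (Real.log s)⁻¹ + α))
      (nhdsWithin 0 (Ioi 0)) (nhds (α ^ 2 * K₁)) := by
    have h4 := (hT1.const_mul (Real.log c)).add
      ((hT3.const_mul α).mul
        ((hT1.const_mul (α * Real.log c)).add (tendsto_const_nhds (x := α))))
    convert h4 using 2
    ring
  have hEq : (fun s : ℝ => (Real.log c + α * Real.log (sep Γ₁ Γ₂ ((c*s) ^ α))) / Real.log s)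
      =ᶠ[nhdsWithin 0 (Ioi 0)]
      (fun s : ℝ => Real.log c * (Real.log s)⁻¹ +
      α * (Real.log (sep Γ₁ Γ₂ ((c*s) ^ α)) / Real.log ((c*s) ^ α)) *
        (α * Real.log c * (Real.log s)⁻¹ + α)) := by
    filter_upwards [Ioo_mem_nhdsGT_of_mem (⟨le_refl (0:ℝ), hB⟩ : (0:ℝ) ∈ Ico (0:ℝ) B)]
      with s hs
    obtain ⟨hspos, hsB⟩ := hs
    have hs1 : s < 1 := hsB.trans_le ((min_le_right _ _).trans (min_le_left _ _))
    have hsc : c * s < 1 := by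
      have : s < 1/c := hsB.trans_le ((min_le_right _ _).trans (min_le_right _ _))
      calc c * s < c * (1/c) := by nlinarith
        _ = 1 := by field_simp
    have hcs : 0 < c * s := by positivity
    have hL : Real.log s ≠ 0 := (Real.log_neg hspos hs1).ne
    have hLcs : Real.log c + Real.log s ≠ 0 := by
      have h1 : Real.log (c*s) < 0 := Real.log_neg hcs hsc
      rw [Real.log_mul hc.ne' hspos.ne'] at h1
      exact h1.ne
    have hLr : Real.log ((c*s) ^ α) = α * (Real.log c + Real.log s) := by
      rw [Real.log_rpow hcs, Real.log_mul hc.ne' hspos.ne']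
    rw [hLr]
    field_simp
  have hTG : Tendsto (fun s : ℝ =>
      (Real.log c + α * Real.log (sep Γ₁ Γ₂ ((c*s) ^ α))) / Real.log s)
      (nhdsWithin 0 (Ioi 0)) (nhds (α ^ 2 * K₁)) := hTG'.congr' hEq.symm
  refine le_of_tendsto_of_tendsto hTG hK₂ ?_
  filter_upwards [Ioo_mem_nhdsGT_of_mem (⟨le_refl (0:ℝ), hB⟩ : (0:ℝ) ∈ Ico (0:ℝ) B)]
    with s hs using hpt s hs

end Key
end ContAux

/-- Proposition 1: a bi-`α`-Hölder homeomorphism `h : X → Y` distorts contacts of pairs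
of closed subsets by a factor at most `1/α²`. -/
theorem cont_bound_of_biHolder {n m : ℕ}
    (X : Set (EuclideanSpace ℝ (Fin n))) (Y : Set (EuclideanSpace ℝ (Fin m)))
    (hX : IsClosed X) (hY : IsClosed Y) (h0X : (0 : EuclideanSpace ℝ (Fin n)) ∈ X)
    (h : EuclideanSpace ℝ (Fin n) → EuclideanSpace ℝ (Fin m))
    (hbij : Set.BijOn h X Y) (h0 : h 0 = 0)
    (c α : ℝ) (hc : 0 < c) (hα : 0 < α) (hα1 : α ≤ 1)
    (hHolder : ∀ p ∈ X, ∀ q ∈ X,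
      (1 / c) * ‖p - q‖ ^ (1 / α) ≤ ‖h p - h q‖ ∧ ‖h p - h q‖ ≤ c * ‖p - q‖ ^ α)
    (Γ₁ Γ₂ : Set (EuclideanSpace ℝ (Fin n)))
    (hΓ₁ : IsClosed Γ₁) (hΓ₂ : IsClosed Γ₂) (hΓ₁X : Γ₁ ⊆ X) (hΓ₂X : Γ₂ ⊆ X)
    (hint : Γ₁ ∩ Γ₂ = {0})
    (K₁ K₂ : ℝ) (hK₁ : hasCont Γ₁ Γ₂ K₁) (hK₂ : hasCont (h '' Γ₁) (h '' Γ₂) K₂) :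
    α ^ 2 * K₂ ≤ K₁ ∧ K₁ ≤ (1 / α ^ 2) * K₂ := by
  have hα' : (0:ℝ) < 1/α := by positivity
  have hα2 : (0:ℝ) < α ^ 2 := by positivity
  constructor
  · -- apply the key estimate to the inverse map
    set g : EuclideanSpace ℝ (Fin m) → EuclideanSpace ℝ (Fin n) :=
      Function.invFunOn h X with hgdef
    have hinv : Set.InvOn g h X Y := hbij.invOn_invFunOn
    have hg0 : g 0 = 0 := by rw [← h0]; exact hinv.1 h0X
    have h0Y : (0 : EuclideanSpace ℝ (Fin m)) ∈ Y := by
      rw [← h0]; exact hbij.mapsTo h0X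
    set c' : ℝ := max (c ^ α) (c ^ (1/α)) with hc'def
    have hc' : 0 < c' := lt_max_of_lt_left (Real.rpow_pos_of_pos hc α)
    have gHolder : ∀ p ∈ Y, ∀ q ∈ Y,
        (1 / c') * ‖p - q‖ ^ (1 / α) ≤ ‖g p - g q‖ ∧ ‖g p - g q‖ ≤ c' * ‖p - q‖ ^ α := by
      intro p hp q hq
      obtain ⟨x, hx, rfl⟩ := hbij.surjOn hp
      obtain ⟨x', hx', rfl⟩ := hbij.surjOn hq
      rw [hinv.1 hx, hinv.1 hx']
      obtain ⟨hlow, hup⟩ := hHolder x hx x' hx'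
      set a : ℝ := ‖x - x'‖ with hadef
      set b : ℝ := ‖h x - h x'‖ with hbdef
      have ha : 0 ≤ a := norm_nonneg _
      have hb : 0 ≤ b := norm_nonneg _
      constructor
      · have h1 : b ^ (1/α) ≤ (c * a ^ α) ^ (1/α) := Real.rpow_le_rpow hb hup hα'.le
        have h2 : (c * a ^ α) ^ (1/α) = c ^ (1/α) * a := by
          rw [Real.mul_rpow hc.le (Real.rpow_nonneg ha α),
            ← Real.rpow_mul ha, mul_one_div_cancel hα.ne', Real.rpow_one]
        have h3 : (1/c') * b ^ (1/α) ≤ (1/c') * (c ^ (1/α) * a) :=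
          mul_le_mul_of_nonneg_left (h1.trans_eq h2) (by positivity)
        refine h3.trans ?_
        have h4 : c ^ (1/α) * a ≤ c' * a :=
          mul_le_mul_of_nonneg_right (le_max_right _ _) ha
        have h5 : (1/c') * (c ^ (1/α) * a) ≤ (1/c') * (c' * a) :=
          mul_le_mul_of_nonneg_left h4 (by positivity)
        refine h5.trans_eq ?_
        field_simp
      · have h1 : a ^ (1/α) ≤ c * b := by
          have := mul_le_mul_of_nonneg_left hlow hc.le
          calc a ^ (1/α) = c * ((1/c) * a ^ (1/α)) := by field_simp
            _ ≤ c * b := this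
        have h2 : a = (a ^ (1/α)) ^ α := by
          rw [← Real.rpow_mul ha, one_div_mul_cancel hα.ne', Real.rpow_one]
        have h3 : (a ^ (1/α)) ^ α ≤ (c * b) ^ α :=
          Real.rpow_le_rpow (Real.rpow_nonneg ha _) h1 hα.le
        have h4 : (c * b) ^ α = c ^ α * b ^ α := Real.mul_rpow hc.le hb
        have h5 : c ^ α * b ^ α ≤ c' * b ^ α :=
          mul_le_mul_of_nonneg_right (le_max_left _ _) (Real.rpow_nonneg hb α)
        calc a = (a ^ (1/α)) ^ α := h2
          _ ≤ (c * b) ^ α := h3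
          _ = c ^ α * b ^ α := h4
          _ ≤ c' * b ^ α := h5
    have hΓ₁Y : h '' Γ₁ ⊆ Y := fun y ⟨x, hx, e⟩ => e ▸ hbij.mapsTo (hΓ₁X hx)
    have hΓ₂Y : h '' Γ₂ ⊆ Y := fun y ⟨x, hx, e⟩ => e ▸ hbij.mapsTo (hΓ₂X hx)
    have him : ∀ Γ : Set (EuclideanSpace ℝ (Fin n)), Γ ⊆ X → g '' (h '' Γ) = Γ := by
      intro Γ hΓX
      rw [Set.image_image]
      calc (fun x => g (h x)) '' Γ = id '' Γ :=
            Set.image_congr fun x hx => hinv.1 (hΓX hx)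
        _ = Γ := Set.image_id Γ
    have hK₁' : hasCont (g '' (h '' Γ₁)) (g '' (h '' Γ₂)) K₁ := by
      rw [him Γ₁ hΓ₁X, him Γ₂ hΓ₂X]; exact hK₁
    exact ContAux.key h0Y hg0 hc' hα gHolder hΓ₁Y hΓ₂Y hK₂ hK₁'
  · have := ContAux.key h0X h0 hc hα hHolder hΓ₁X hΓ₂X hK₁ hK₂
    rw [one_div, inv_mul_eq_div, le_div_iff₀ hα2]
    linarith
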